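/- arXiv:1204.4829 — 8 statements merged into one kernel-verified Lean document; each statement's English description precedes it below -/
import Mathlib

section
/- Let x ∈ {0,1}^n, let b : Fin n → Fin n → ℝ be nonnegative, and let i be an index. If v_i is an upper bound for ∑_{j≠i} b i j * x'_j over all feasible x' with x'_i = 0, and l_i is a lower bound for ∑_{j≠i} b i j * x'_j over all feasible x' with x'_i = 1 (where x is feasible), then x_i * (∑_{j≠i} b i j * x_j) = max(∑_{j≠i} b i j * x_j + v_i * x_i - v_i, l_i * x_i). -/
theorem stmt_0 (n : ℕ) (b : Fin n → Fin n → ℝ) (hb : ∀ i j, 0 ≤ b i j)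
    (X : Set (Fin n → ℝ)) (hX01 : ∀ x' ∈ X, ∀ j, x' j = 0 ∨ x' j = 1)
    (x : Fin n → ℝ) (hxX : x ∈ X) (i : Fin n) (v l : ℝ)
    (hv : ∀ x' ∈ X, x' i = 0 → ∑ j ∈ Finset.univ.erase i, b i j * x' j ≤ v)
    (hl : ∀ x' ∈ X, x' i = 1 → l ≤ ∑ j ∈ Finset.univ.erase i, b i j * x' j) :
    x i * (∑ j ∈ Finset.univ.erase i, b i j * x j) =
      max ((∑ j ∈ Finset.univ.erase i, b i j * x j) + v * x i - v) (l * x i) := by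
  rcases hX01 x hxX i with h | h
  · have hsv := hv x hxX h
    rw [h]
    simp only [zero_mul, mul_zero, add_zero]
    rw [max_eq_right (by linarith)]
  · have hls := hl x hxX h
    rw [h]
    simp only [one_mul, mul_one]
    rw [max_eq_left (by linarith)]
    ring
end

section
/- Equivalence of (P) and (PL1): the infimum over x ∈ X of ∑_i x_i (∑_{j≠i} b i j x_j) + ∑_i c_i x_i equals the infimum over (x,y) with x ∈ X, y_i ≥ ∑_{j≠i} b i j x_j + u_i x_i − u_i, y_i ≥ 0, of ∑_i y_i + ∑_i c_i x_i. -/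
theorem stmt_3 (n : ℕ) (X : Set (Fin n → ℝ)) (hXne : X.Nonempty) (hXfin : X.Finite)
    (hX01 : ∀ x ∈ X, ∀ j, x j = 0 ∨ x j = 1)
    (b : Fin n → Fin n → ℝ) (hb : ∀ i j, 0 ≤ b i j) (c u : Fin n → ℝ)
    (hu : ∀ x ∈ X, ∀ i, ∑ j ∈ Finset.univ.erase i, b i j * x j ≤ u i) :
    sInf {q | ∃ x ∈ X,
        q = ∑ i, x i * (∑ j ∈ Finset.univ.erase i, b i j * x j) + ∑ i, c i * x i} =
    sInf {q | ∃ x ∈ X, ∃ y : Fin n → ℝ,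
        (∀ i, (∑ j ∈ Finset.univ.erase i, b i j * x j) + u i * x i - u i ≤ y i) ∧
        (∀ i, 0 ≤ y i) ∧ q = ∑ i, y i + ∑ i, c i * x i} := by
  set s : (Fin n → ℝ) → Fin n → ℝ :=
    fun x i => ∑ j ∈ Finset.univ.erase i, b i j * x j with hs
  set f : (Fin n → ℝ) → ℝ := fun x => ∑ i, x i * s x i + ∑ i, c i * x i with hf
  set S1 : Set ℝ := {q | ∃ x ∈ X, q = f x} with hS1
  set S2 : Set ℝ := {q | ∃ x ∈ X, ∃ y : Fin n → ℝ,
      (∀ i, s x i + u i * x i - u i ≤ y i) ∧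
      (∀ i, 0 ≤ y i) ∧ q = ∑ i, y i + ∑ i, c i * x i} with hS2
  have hx0 : ∀ x ∈ X, ∀ j, 0 ≤ x j := by
    intro x hx j; rcases hX01 x hx j with h | h <;> rw [h] <;> norm_num
  have hs0 : ∀ x ∈ X, ∀ i, 0 ≤ s x i := by
    intro x hx i
    exact Finset.sum_nonneg fun j _ => mul_nonneg (hb i j) (hx0 x hx j)
  -- S1 is the image of X under f
  have hS1img : S1 = f '' X := by
    ext q; simp [hS1, Set.mem_image, eq_comm]
  have hS1fin : S1.Finite := hS1img ▸ hXfin.image f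
  have hS1ne : S1.Nonempty := by
    obtain ⟨x, hx⟩ := hXne; exact ⟨f x, x, hx, rfl⟩
  have hS1bdd : BddBelow S1 := hS1fin.bddBelow
  -- S1 ⊆ S2
  have hsub : S1 ⊆ S2 := by
    rintro q ⟨x, hx, rfl⟩
    refine ⟨x, hx, fun i => x i * s x i, ?_, ?_, rfl⟩
    · intro i
      show s x i + u i * x i - u i ≤ x i * s x i
      rcases hX01 x hx i with h | h
      · rw [h]; simp; linarith [hu x hx i]
      · rw [h]; simp
    · intro i; exact mul_nonneg (hx0 x hx i) (hs0 x hx i)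
  have hS2ne : S2.Nonempty := hS1ne.mono hsub
  -- every element of S2 dominates some element of S1
  have hdom : ∀ q ∈ S2, sInf S1 ≤ q := by
    rintro q ⟨x, hx, y, hy1, hy2, rfl⟩
    have hfx : f x ≤ ∑ i, y i + ∑ i, c i * x i := by
      have : ∑ i, x i * s x i ≤ ∑ i, y i := by
        apply Finset.sum_le_sum
        intro i _
        rcases hX01 x hx i with h | h
        · rw [h]; simpa using hy2 i
        · rw [h]; have := hy1 i; rw [h] at this; linarith
      simp only [hf]; linarith
    exact le_trans (csInf_le hS1bdd ⟨x, hx, rfl⟩) hfx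
  refine le_antisymm (le_csInf hS2ne hdom) ?_
  exact csInf_le_csInf ⟨sInf S1, fun q hq => hdom q hq⟩ hS1ne hsub
end

section
/- Equivalence of (P) and (PL2): the infimum over x ∈ X of ∑_i x_i (∑_{j≠i} b i j x_j) + ∑_i c_i x_i equals the infimum over (x,y) with x ∈ X, y_i ≥ ∑_{j≠i} b i j x_j + v_i x_i − v_i, y_i ≥ l_i x_i, of ∑_i y_i + ∑_i c_i x_i, where v_i (resp. l_i) is the max (resp. min) of ∑_{j≠i} b i j x_j over x ∈ X with x_i = 0 (resp. x_i = 1). -/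
theorem stmt_4 (n : ℕ) (X : Set (Fin n → ℝ)) (hXne : X.Nonempty) (hXfin : X.Finite)
    (hX01 : ∀ x ∈ X, ∀ j, x j = 0 ∨ x j = 1)
    (b : Fin n → Fin n → ℝ) (hb : ∀ i j, 0 ≤ b i j) (c v l : Fin n → ℝ)
    (hv : ∀ i, IsGreatest
        {s | ∃ x ∈ X, x i = 0 ∧ s = ∑ j ∈ Finset.univ.erase i, b i j * x j} (v i))
    (hl : ∀ i, IsLeast
        {s | ∃ x ∈ X, x i = 1 ∧ s = ∑ j ∈ Finset.univ.erase i, b i j * x j} (l i)) :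
    sInf {q | ∃ x ∈ X,
        q = ∑ i, x i * (∑ j ∈ Finset.univ.erase i, b i j * x j) + ∑ i, c i * x i} =
    sInf {q | ∃ x ∈ X, ∃ y : Fin n → ℝ,
        (∀ i, (∑ j ∈ Finset.univ.erase i, b i j * x j) + v i * x i - v i ≤ y i) ∧
        (∀ i, l i * x i ≤ y i) ∧ q = ∑ i, y i + ∑ i, c i * x i} := by
  classical
  set S : (Fin n → ℝ) → Fin n → ℝ :=
    fun x i => ∑ j ∈ Finset.univ.erase i, b i j * x j with hS
  set f : (Fin n → ℝ) → ℝ := fun x => ∑ i, x i * S x i + ∑ i, c i * x i with hf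
  set A : Set ℝ := {q | ∃ x ∈ X, q = f x} with hA
  set B : Set ℝ := {q | ∃ x ∈ X, ∃ y : Fin n → ℝ,
        (∀ i, S x i + v i * x i - v i ≤ y i) ∧
        (∀ i, l i * x i ≤ y i) ∧ q = ∑ i, y i + ∑ i, c i * x i} with hB
  have hSv : ∀ x ∈ X, ∀ i, x i = 0 → S x i ≤ v i := fun x hx i h0 =>
    (hv i).2 ⟨x, hx, h0, rfl⟩
  have hSl : ∀ x ∈ X, ∀ i, x i = 1 → l i ≤ S x i := fun x hx i h1 =>
    (hl i).2 ⟨x, hx, h1, rfl⟩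
  have hAim : A = f '' X := by
    ext q
    constructor
    · rintro ⟨x, hx, rfl⟩; exact ⟨x, hx, rfl⟩
    · rintro ⟨x, hx, rfl⟩; exact ⟨x, hx, rfl⟩
  have hAne : A.Nonempty := ⟨f hXne.choose, hXne.choose, hXne.choose_spec, rfl⟩
  have hAbdd : BddBelow A := hAim ▸ (hXfin.image f).bddBelow
  -- every element of B is ≥ sInf A
  have hBge : ∀ q ∈ B, sInf A ≤ q := by
    rintro q ⟨x, hx, y, h1, h2, rfl⟩
    have hxy : ∀ i, x i * S x i ≤ y i := by
      intro i
      rcases hX01 x hx i with h0 | hone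
      · rw [h0, zero_mul]
        have := h2 i; rw [h0, mul_zero] at this; exact this
      · rw [hone, one_mul]
        have := h1 i; rw [hone, mul_one] at this; linarith
    have : f x ≤ ∑ i, y i + ∑ i, c i * x i := by
      have : ∑ i, x i * S x i ≤ ∑ i, y i :=
        Finset.sum_le_sum fun i _ => hxy i
      simp only [hf]; linarith
    exact le_trans (csInf_le hAbdd ⟨x, hx, rfl⟩) this
  have hBne : B.Nonempty := by
    obtain ⟨x, hx⟩ := hXne
    refine ⟨f x, x, hx, fun i => x i * S x i, ?_, ?_, ?_⟩
    · intro i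
      show S x i + v i * x i - v i ≤ x i * S x i
      rcases hX01 x hx i with h0 | hone
      · rw [h0]; simp; linarith [hSv x hx i h0]
      · rw [hone]; simp
    · intro i
      show l i * x i ≤ x i * S x i
      rcases hX01 x hx i with h0 | hone
      · rw [h0]; simp
      · rw [hone]; simpa using hSl x hx i hone
    · rfl
  have hAB : A ⊆ B := by
    rintro q ⟨x, hx, rfl⟩
    refine ⟨x, hx, fun i => x i * S x i, ?_, ?_, ?_⟩
    · intro i
      show S x i + v i * x i - v i ≤ x i * S x i
      rcases hX01 x hx i with h0 | hone
      · rw [h0]; simp; linarith [hSv x hx i h0]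
      · rw [hone]; simp
    · intro i
      show l i * x i ≤ x i * S x i
      rcases hX01 x hx i with h0 | hone
      · rw [h0]; simp
      · rw [hone]; simpa using hSl x hx i hone
    · rfl
  have hBbdd : BddBelow B := ⟨sInf A, fun q hq => hBge q hq⟩
  exact le_antisymm (le_csInf hBne hBge) (csInf_le_csInf hBbdd hAne hAB)
end

section
/- Feasible region inclusion implying v(R-PL1) ≤ v(R-PL2): if 0 ≤ l_i, v_i ≤ u_i, and x_i ∈ [0,1] for all i, then any (x,y) satisfying y_i ≥ ∑_{j≠i} b i j x_j + v_i x_i − v_i and y_i ≥ l_i x_i for all i also satisfies y_i ≥ ∑_{j≠i} b i j x_j + u_i x_i − u_i and y_i ≥ 0 for all i. Consequently, the infimum of ∑_i y_i + c_i x_i over the PL1 relaxation feasible set is at most the infimum over the PL2 relaxation feasible set. -/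
theorem stmt_5 (n : ℕ) (b : Fin n → Fin n → ℝ) (c u v l : Fin n → ℝ)
    (hl : ∀ i, 0 ≤ l i) (hvu : ∀ i, v i ≤ u i) :
    (∀ x y : Fin n → ℝ, (∀ i, 0 ≤ x i ∧ x i ≤ 1) →
      (∀ i, (∑ j ∈ Finset.univ.erase i, b i j * x j) + v i * x i - v i ≤ y i) →
      (∀ i, l i * x i ≤ y i) →
      (∀ i, (∑ j ∈ Finset.univ.erase i, b i j * x j) + u i * x i - u i ≤ y i) ∧
      (∀ i, 0 ≤ y i)) ∧
    sInf {q | ∃ x y : Fin n → ℝ, (∀ i, 0 ≤ x i ∧ x i ≤ 1) ∧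
        (∀ i, (∑ j ∈ Finset.univ.erase i, b i j * x j) + u i * x i - u i ≤ y i) ∧
        (∀ i, 0 ≤ y i) ∧ q = ∑ i, (y i + c i * x i)} ≤
    sInf {q | ∃ x y : Fin n → ℝ, (∀ i, 0 ≤ x i ∧ x i ≤ 1) ∧
        (∀ i, (∑ j ∈ Finset.univ.erase i, b i j * x j) + v i * x i - v i ≤ y i) ∧
        (∀ i, l i * x i ≤ y i) ∧ q = ∑ i, (y i + c i * x i)} := by
  have key : ∀ x y : Fin n → ℝ, (∀ i, 0 ≤ x i ∧ x i ≤ 1) →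
      (∀ i, (∑ j ∈ Finset.univ.erase i, b i j * x j) + v i * x i - v i ≤ y i) →
      (∀ i, l i * x i ≤ y i) →
      (∀ i, (∑ j ∈ Finset.univ.erase i, b i j * x j) + u i * x i - u i ≤ y i) ∧
      (∀ i, 0 ≤ y i) := by
    intro x y hx hv hly
    constructor
    · intro i
      have h1 := (hx i).1
      have h2 := (hx i).2
      have h3 := hvu i
      have h4 := hv i
      nlinarith [mul_nonneg (sub_nonneg.2 h3) (sub_nonneg.2 h2)]
    · intro i
      exact le_trans (mul_nonneg (hl i) (hx i).1) (hly i)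
  refine ⟨key, ?_⟩
  apply csInf_le_csInf
  · -- bounded below by -∑ |c i|
    refine ⟨-∑ i, |c i|, ?_⟩
    rintro q ⟨x, y, hx, _, hy, rfl⟩
    have : ∀ i ∈ Finset.univ, -|c i| ≤ y i + c i * x i := by
      intro i _
      have h1 : |c i * x i| ≤ |c i| := by
        rw [abs_mul]
        nlinarith [abs_nonneg (c i), abs_of_nonneg (hx i).1, (hx i).2]
      have := neg_abs_le (c i * x i)
      have := hy i
      linarith
    calc -∑ i, |c i| = ∑ i, -|c i| := by rw [Finset.sum_neg_distrib]
      _ ≤ ∑ i, (y i + c i * x i) := Finset.sum_le_sum this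
  · -- v-set nonempty
    refine ⟨∑ i, (max (-v i) 0 + c i * 0), 0, fun i => max (-v i) 0, fun i => ⟨le_refl 0, zero_le_one⟩, ?_, ?_, rfl⟩
    · intro i
      simp
    · intro i
      simp [le_max_iff]
  · -- subset
    rintro q ⟨x, y, hx, hv, hly, rfl⟩
    obtain ⟨h1, h2⟩ := key x y hx hv hly
    exact ⟨x, y, hx, h1, h2, rfl⟩
end

section
/- Validity of the Benders cuts (DL1): for any λ ∈ [0,1]^n and any x ∈ {0,1}^n, the quadratic value z := ∑_i x_i (∑_{j≠i} b i j x_j) satisfies z ≥ ∑_i α_i x_i − β, where α_i := ∑_{j≠i} λ_j b j i + λ_i u_i, β := ∑_i λ_i u_i, and u_i ≥ ∑_{j≠i} b i j x_j. -/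
theorem stmt_6 (n : ℕ) (b : Fin n → Fin n → ℝ) (hb : ∀ i j, 0 ≤ b i j)
    (x lam u : Fin n → ℝ) (hx01 : ∀ i, x i = 0 ∨ x i = 1)
    (hlam : ∀ i, 0 ≤ lam i ∧ lam i ≤ 1)
    (hu : ∀ i, ∑ j ∈ Finset.univ.erase i, b i j * x j ≤ u i) :
    ∑ i, (∑ j ∈ Finset.univ.erase i, lam j * b j i + lam i * u i) * x i -
      ∑ i, lam i * u i ≤
    ∑ i, x i * (∑ j ∈ Finset.univ.erase i, b i j * x j) := by
  set s : Fin n → ℝ := fun i => ∑ j ∈ Finset.univ.erase i, b i j * x j with hs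
  have hxnn : ∀ j, 0 ≤ x j := fun j => by rcases hx01 j with h | h <;> simp [h]
  have hsnn : ∀ i, 0 ≤ s i := fun i =>
    Finset.sum_nonneg fun j _ => mul_nonneg (hb i j) (hxnn j)
  have key : ∑ i, (∑ j ∈ Finset.univ.erase i, lam j * b j i) * x i
      = ∑ i, lam i * s i := by
    have h1 : ∑ i, ∑ j ∈ Finset.univ.erase i, lam j * b j i * x i
        = ∑ j, ∑ i ∈ Finset.univ.erase j, lam j * b j i * x i :=
      Finset.sum_comm' (by
        intro i j
        simp [Finset.mem_erase, eq_comm, and_comm])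
    simp only [Finset.sum_mul]
    rw [h1]
    refine Finset.sum_congr rfl fun j _ => ?_
    rw [hs, Finset.mul_sum]
    exact Finset.sum_congr rfl fun i _ => by ring
  simp only [add_mul, Finset.sum_add_distrib]
  rw [key, ← Finset.sum_add_distrib, ← Finset.sum_sub_distrib]
  apply Finset.sum_le_sum
  intro i _
  rcases hx01 i with h | h
  · simp only [h, mul_zero, zero_mul, add_zero]
    have := hu i
    have h0 := (hlam i).1
    rw [hs]
    nlinarith
  · simp only [h, mul_one, one_mul]
    have h1 := (hlam i).2
    nlinarith [hsnn i]
end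

section
/- Validity of the DL2 cuts: for λ ∈ {0,1}^n (an extreme point) and x ∈ {0,1}^n feasible, ∑_i x_i(∑_{j≠i} b i j x_j) ≥ ∑_i (ᾱ_i + l_i) x_i − β̄ − ∑_i l_i x_i + ∑_i l_i x_i, i.e., ∑_i (x_i ∑_{j≠i} b i j x_j − l_i x_i) ≥ ∑_i ᾱ_i x_i − β̄, where ᾱ_i := ∑_{j≠i} λ_j b j i + λ_i (v_i − l_i) and β̄ := ∑_i λ_i v_i, provided v_i ≥ ∑_{j≠i} b i j x_j whenever x_i = 0 is possible (v_i is a valid bound as in PL2) and l_i x_i ≤ x_i ∑_{j≠i} b i j x_j. -/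
theorem stmt_8 (n : ℕ) (b : Fin n → Fin n → ℝ) (hb : ∀ i j, 0 ≤ b i j)
    (x lam v l : Fin n → ℝ) (hx01 : ∀ i, x i = 0 ∨ x i = 1)
    (hlam : ∀ i, 0 ≤ lam i ∧ lam i ≤ 1)
    (hv : ∀ i, (∑ j ∈ Finset.univ.erase i, b i j * x j) + v i * x i - v i ≤
          x i * (∑ j ∈ Finset.univ.erase i, b i j * x j))
    (hl : ∀ i, l i * x i ≤ x i * (∑ j ∈ Finset.univ.erase i, b i j * x j)) :
    ∑ i, (∑ j ∈ Finset.univ.erase i, lam j * b j i + lam i * (v i - l i)) * x i -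
      ∑ i, lam i * v i ≤
    ∑ i, (x i * (∑ j ∈ Finset.univ.erase i, b i j * x j) - l i * x i) := by
  have swap : ∑ i, (∑ j ∈ Finset.univ.erase i, lam j * b j i) * x i
      = ∑ i, lam i * (∑ j ∈ Finset.univ.erase i, b i j * x j) := by
    simp_rw [Finset.sum_mul, Finset.mul_sum, mul_assoc]
    exact Finset.sum_comm' (by intro i j; simp [Finset.mem_erase, eq_comm])
  simp_rw [add_mul, Finset.sum_add_distrib]
  rw [swap, ← Finset.sum_add_distrib, ← Finset.sum_sub_distrib]
  apply Finset.sum_le_sum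
  intro i _
  have h1 := mul_le_mul_of_nonneg_left (hv i) (hlam i).1
  have h2 := mul_le_mul_of_nonneg_left (hl i) (sub_nonneg.mpr (hlam i).2)
  nlinarith [h1, h2]
end

section
/- Finite convergence (Lemma 2, restated): suppose x̃ ∈ X is optimal for the restricted master problem with cut set including the cut generated by λ = x̃ (i.e., the restricted optimum z̃ satisfies z̃ ≥ ∑_i α_i x̃_i − β with α_i = ∑_{j≠i} x̃_j b j i + x̃_i u_i, β = ∑_i x̃_i u_i), and z̃ + ∑_i c_i x̃_i is a lower bound for min_{x∈X} q(x) where q(x) = ∑_i x_i ∑_{j≠i} b i j x_j + ∑_i c_i x_i. Then x̃ is an optimal solution of (P), i.e., q(x̃) = min_{x∈X} q(x). -/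
theorem stmt_13 (n : ℕ) (X : Set (Fin n → ℝ)) (hXne : X.Nonempty) (hXfin : X.Finite)
    (hX01 : ∀ x ∈ X, ∀ j, x j = 0 ∨ x j = 1)
    (b : Fin n → Fin n → ℝ) (hb : ∀ i j, 0 ≤ b i j) (c u : Fin n → ℝ)
    (xt : Fin n → ℝ) (hxt : xt ∈ X) (zt : ℝ)
    (hlb : ∀ x ∈ X, zt + ∑ i, c i * xt i ≤
        ∑ i, x i * (∑ j ∈ Finset.univ.erase i, b i j * x j) + ∑ i, c i * x i)
    (hcut : ∑ i, (∑ j ∈ Finset.univ.erase i, xt j * b j i + xt i * u i) * xt i -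
        ∑ i, xt i * u i ≤ zt) :
    ∀ x ∈ X,
      ∑ i, xt i * (∑ j ∈ Finset.univ.erase i, b i j * xt j) + ∑ i, c i * xt i ≤
      ∑ i, x i * (∑ j ∈ Finset.univ.erase i, b i j * x j) + ∑ i, c i * x i := by
  intro x hx
  have hsq : ∀ i, xt i * xt i = xt i := by
    intro i
    rcases hX01 xt hxt i with h | h <;> rw [h] <;> ring
  have key : ∑ i, xt i * (∑ j ∈ Finset.univ.erase i, b i j * xt j) ≤ zt := by
    have h1 : ∑ i, (∑ j ∈ Finset.univ.erase i, xt j * b j i + xt i * u i) * xt i -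
        ∑ i, xt i * u i = ∑ i, ∑ j ∈ Finset.univ.erase i, xt j * b j i * xt i := by
      have step : ∀ i : Fin n, (∑ j ∈ Finset.univ.erase i, xt j * b j i + xt i * u i) * xt i
          = (∑ j ∈ Finset.univ.erase i, xt j * b j i * xt i) + xt i * u i := by
        intro i
        rw [add_mul, mul_right_comm (xt i) (u i) (xt i), hsq, Finset.sum_mul]
      rw [Finset.sum_congr rfl (fun i _ => step i), Finset.sum_add_distrib]
      ring
    have herase : ∀ i : Fin n, (Finset.univ.erase i : Finset (Fin n))
        = Finset.univ.filter (fun j => j ≠ i) := by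
      intro i; ext j; simp [Finset.mem_erase]
    have h2 : ∑ i, ∑ j ∈ Finset.univ.erase i, xt j * b j i * xt i
        = ∑ i, xt i * (∑ j ∈ Finset.univ.erase i, b i j * xt j) := by
      simp_rw [herase, Finset.sum_filter, Finset.mul_sum]
      rw [Finset.sum_comm]
      apply Finset.sum_congr rfl
      intro i _
      apply Finset.sum_congr rfl
      intro j _
      by_cases h : i = j
      · simp [h]
      · simp only [Ne, h, Ne.symm h, if_true, if_neg]
        split <;> [ring; simp_all]
    calc ∑ i, xt i * (∑ j ∈ Finset.univ.erase i, b i j * xt j)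
        = ∑ i, (∑ j ∈ Finset.univ.erase i, xt j * b j i + xt i * u i) * xt i -
          ∑ i, xt i * u i := by rw [h1, h2]
      _ ≤ zt := hcut
  have := hlb x hx
  linarith
end

section
/- Max-formula for the second-stage value: for fixed x ∈ X ⊆ {0,1}^n with u_i ≥ ∑_{j≠i} b i j x_j and b nonnegative, min{∑_i y_i : y_i ≥ ∑_{j≠i} b i j x_j + u_i x_i − u_i, y_i ≥ 0} = ∑_i x_i ∑_{j≠i} b i j x_j, i.e., the inner LP of the Benders decomposition recovers the quadratic term exactly. -/
theorem stmt_19 (n : ℕ) (b : Fin n → Fin n → ℝ) (hb : ∀ i j, 0 ≤ b i j)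
    (x u : Fin n → ℝ) (hx01 : ∀ i, x i = 0 ∨ x i = 1)
    (hu : ∀ i, ∑ j ∈ Finset.univ.erase i, b i j * x j ≤ u i) :
    sInf {s | ∃ y : Fin n → ℝ,
        (∀ i, (∑ j ∈ Finset.univ.erase i, b i j * x j) + u i * x i - u i ≤ y i) ∧
        (∀ i, 0 ≤ y i) ∧ s = ∑ i, y i} =
      ∑ i, x i * (∑ j ∈ Finset.univ.erase i, b i j * x j) := by
  set S : Fin n → ℝ := fun i => ∑ j ∈ Finset.univ.erase i, b i j * x j with hS
  have hSnn : ∀ i, 0 ≤ S i := fun i =>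
    Finset.sum_nonneg fun j _ => mul_nonneg (hb i j)
      (by rcases hx01 j with h | h <;> rw [h] <;> norm_num)
  have hmem : (∑ i, x i * S i) ∈ {s | ∃ y : Fin n → ℝ,
      (∀ i, S i + u i * x i - u i ≤ y i) ∧ (∀ i, 0 ≤ y i) ∧ s = ∑ i, y i} := by
    refine ⟨fun i => x i * S i, fun i => ?_, fun i => ?_, rfl⟩
    · simp only
      rcases hx01 i with h | h
      · rw [h]; simp only [mul_zero, zero_mul, add_zero]; linarith [hu i]
      · rw [h]; simp only [mul_one, one_mul]; linarith
    · exact mul_nonneg (by rcases hx01 i with h | h <;> rw [h] <;> norm_num) (hSnn i)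
  have hlb : ∀ s ∈ {s | ∃ y : Fin n → ℝ,
      (∀ i, S i + u i * x i - u i ≤ y i) ∧ (∀ i, 0 ≤ y i) ∧ s = ∑ i, y i},
      (∑ i, x i * S i) ≤ s := by
    rintro s ⟨y, h1, h2, rfl⟩
    apply Finset.sum_le_sum
    intro i _
    rcases hx01 i with h | h
    · rw [h]; simpa using h2 i
    · rw [h]; have := h1 i; rw [h] at this; simp at this ⊢; linarith
  exact le_antisymm (csInf_le ⟨_, hlb⟩ hmem) (le_csInf ⟨_, hmem⟩ hlb)
end
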